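/- For every real τ with 0 < τ ≤ 1/4 and every real Y > 0, one has lim_{T→+∞} ∫_0^Y F(T + iy, τ) · i dy = 0 (the integral over the vertical segment from T to T + iY tends to 0 as T → +∞). -/

import Mathlib

open Real Complex Filter MeasureTheory intervalIntegral

noncomputable def F (τ : ℝ) (z : ℂ) : ℂ :=
  2 * (π : ℂ) * (1 + (1 / 4 : ℂ) * z ^ (-(5 : ℂ) / 2)) *
    Complex.exp (-(π : ℂ) * z - (π : ℂ) / (4 * z)) *
    (1 - Complex.I * z) ^ ((1 / 2 : ℂ) * (1 / 2 + 2 * (π : ℂ) * Complex.I / (τ : ℂ) ^ 2))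

lemma F_bound (τ : ℝ) (hτ0 : 0 < τ) (Y : ℝ) (hY : 0 < Y) (T : ℝ) (hT : 1 ≤ T)
    (y : ℝ) (hy0 : 0 ≤ y) (hyY : y ≤ Y) :
    ‖F τ ((T : ℂ) + Complex.I * (y : ℂ)) * Complex.I‖ ≤
      (5 / 2 * π * Real.exp (π ^ 2 / τ ^ 2)) * ((1 + Y + T) * Real.exp (-π * T)) := by
  set z : ℂ := (T : ℂ) + Complex.I * (y : ℂ) with hz
  have hzre : z.re = T := by simp [hz]
  have hzim : z.im = y := by simp [hz]
  have hT0 : (0:ℝ) < T := lt_of_lt_of_le one_pos hT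
  have habsz : 1 ≤ ‖z‖ := by
    calc (1:ℝ) ≤ T := hT
    _ = |z.re| := by rw [hzre, _root_.abs_of_pos hT0]
    _ ≤ ‖z‖ := Complex.abs_re_le_norm z
  have hA : ‖(1 + (1 / 4 : ℂ) * z ^ (-(5 : ℂ) / 2))‖ ≤ 5/4 := by
    have h1 : ‖z ^ (-(5 : ℂ) / 2)‖ ≤ 1 := by
      have := Complex.norm_cpow_le z (-(5 : ℂ) / 2)
      simp only [show ((-(5 : ℂ) / 2)).re = -(5/2) by norm_num [Complex.div_re],
        show ((-(5 : ℂ) / 2)).im = 0 by norm_num [Complex.div_im], zero_mul,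
        Real.exp_zero, div_one, mul_zero] at this
      refine this.trans ?_
      exact Real.rpow_le_one_of_one_le_of_nonpos habsz (by norm_num)
    calc ‖(1 + (1 / 4 : ℂ) * z ^ (-(5 : ℂ) / 2))‖
        ≤ ‖(1:ℂ)‖ + ‖(1 / 4 : ℂ) * z ^ (-(5 : ℂ) / 2)‖ := norm_add_le _ _
      _ ≤ 1 + (1/4) * 1 := by
          rw [norm_one, norm_mul]
          gcongr
          · simp
      _ = 5/4 := by norm_num
  have hE : ‖Complex.exp (-(π : ℂ) * z - (π : ℂ) / (4 * z))‖ ≤ Real.exp (-π * T) := by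
    rw [Complex.norm_exp]
    apply Real.exp_le_exp.2
    have h1 : (-(π : ℂ) * z).re = -π * T := by
      simp [hzre, hzim]
    have h2 : 0 ≤ ((π : ℂ) / (4 * z)).re := by
      rw [Complex.div_re]
      have h4re : ((4:ℂ) * z).re = 4 * T := by simp [hzre, hzim]
      have h4im : ((4:ℂ) * z).im = 4 * y := by simp [hzre, hzim]
      simp only [h4re, h4im, Complex.ofReal_re, Complex.ofReal_im, zero_mul, zero_div, add_zero]
      have hnsq : 0 ≤ Complex.normSq (4 * z) := Complex.normSq_nonneg _
      have : 0 ≤ π * (4 * T) := by positivity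
      exact div_nonneg this hnsq
    rw [Complex.sub_re, h1]
    linarith
  have hwre : ((1:ℂ) - Complex.I * z).re = 1 + y := by simp [hzre, hzim]
  have hsre : (((1 / 2 : ℂ) * (1 / 2 + 2 * (π : ℂ) * Complex.I / (τ : ℂ) ^ 2))).re = 1/4 ∧
      (((1 / 2 : ℂ) * (1 / 2 + 2 * (π : ℂ) * Complex.I / (τ : ℂ) ^ 2))).im = π / τ ^ 2 := by
    have hτne : (τ:ℂ) ≠ 0 := Complex.ofReal_ne_zero.2 hτ0.ne'
    have h : ((1 / 2 : ℂ) * (1 / 2 + 2 * (π : ℂ) * Complex.I / (τ : ℂ) ^ 2)) =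
        Complex.ofReal (1/4) + Complex.ofReal (π / τ ^ 2) * Complex.I := by
      push_cast
      field_simp
      ring
    rw [h]
    constructor <;> simp [← Complex.ofReal_pow, ← Complex.ofReal_div]
  have habsw : ‖(1:ℂ) - Complex.I * z‖ ≤ 1 + Y + T := by
    calc ‖(1:ℂ) - Complex.I * z‖
        ≤ ‖(1:ℂ)‖ + ‖Complex.I * z‖ := by
          simpa [sub_eq_add_neg] using norm_add_le (1:ℂ) (-(Complex.I * z))
      _ = 1 + ‖z‖ := by simp
      _ ≤ 1 + (|z.re| + |z.im|) := by linarith [Complex.norm_le_abs_re_add_abs_im z]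
      _ ≤ 1 + Y + T := by
          rw [hzre, hzim, _root_.abs_of_pos hT0, _root_.abs_of_nonneg hy0]
          linarith
  have hB : ‖((1:ℂ) - Complex.I * z) ^ ((1 / 2 : ℂ) * (1 / 2 + 2 * (π : ℂ) * Complex.I / (τ : ℂ) ^ 2))‖
      ≤ (1 + Y + T) * Real.exp (π ^ 2 / τ ^ 2) := by
    refine (Complex.norm_cpow_le _ _).trans ?_
    rw [hsre.1, hsre.2, div_eq_mul_inv, ← Real.exp_neg]
    have h1 : ‖(1:ℂ) - Complex.I * z‖ ^ (1/4 : ℝ) ≤ 1 + Y + T := by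
      have hb1 : (1:ℝ) ≤ 1 + Y + T := by linarith
      calc ‖(1:ℂ) - Complex.I * z‖ ^ (1/4 : ℝ)
          ≤ (1 + Y + T) ^ (1/4 : ℝ) :=
            Real.rpow_le_rpow (norm_nonneg _) habsw (by norm_num)
        _ ≤ (1 + Y + T) ^ (1 : ℝ) := Real.rpow_le_rpow_of_exponent_le hb1 (by norm_num)
        _ = 1 + Y + T := Real.rpow_one _
    have h2 : Real.exp (-(Complex.arg ((1:ℂ) - Complex.I * z) * (π / τ ^ 2))) ≤
        Real.exp (π ^ 2 / τ ^ 2) := by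
      apply Real.exp_le_exp.2
      have harg : |Complex.arg ((1:ℂ) - Complex.I * z)| ≤ π := Complex.abs_arg_le_pi _
      have hpos : (0:ℝ) ≤ π / τ ^ 2 := by positivity
      have h3 := neg_abs_le (Complex.arg ((1:ℂ) - Complex.I * z))
      have h4 : π ^ 2 / τ ^ 2 = π * (π / τ ^ 2) := by ring
      rw [h4]
      nlinarith
    exact mul_le_mul h1 h2 (Real.exp_pos _).le (by linarith)
  rw [norm_mul, Complex.norm_I, mul_one]
  have hFle : ‖F τ z‖ ≤
      2 * π * (5/4) * Real.exp (-π * T) * ((1 + Y + T) * Real.exp (π ^ 2 / τ ^ 2)) := by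
    unfold F
    rw [norm_mul, norm_mul, norm_mul]
    have h2π : ‖(2:ℂ) * (π:ℂ)‖ = 2 * π := by
      rw [norm_mul]; simp [Real.pi_pos.le]
    rw [h2π]
    gcongr
  exact hFle.trans_eq (by ring)

theorem statement11 (τ : ℝ) (hτ0 : 0 < τ) (hτ : τ ≤ 1 / 4) (Y : ℝ) (hY : 0 < Y) :
    Tendsto
      (fun T : ℝ => ∫ y in (0 : ℝ)..Y, F τ ((T : ℂ) + Complex.I * (y : ℂ)) * Complex.I)
      atTop (nhds 0) := by
  set c : ℝ := 5 / 2 * π * Real.exp (π ^ 2 / τ ^ 2) with hc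
  have hmul : Tendsto (fun T : ℝ => π * T) atTop atTop :=
    Tendsto.const_mul_atTop Real.pi_pos tendsto_id
  have hexp : Tendsto (fun T : ℝ => Real.exp (-(π * T))) atTop (nhds 0) :=
    Real.tendsto_exp_neg_atTop_nhds_zero.comp hmul
  rw [show (fun T : ℝ => Real.exp (-(π * T))) = (fun T : ℝ => Real.exp (-π * T)) from
    funext fun T => by rw [neg_mul]] at hexp
  have hTe : Tendsto (fun T : ℝ => T * Real.exp (-π * T)) atTop (nhds 0) := by
    have := tendsto_rpow_mul_exp_neg_mul_atTop_nhds_zero 1 π Real.pi_pos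
    refine this.congr' ?_
    filter_upwards [eventually_gt_atTop (0:ℝ)] with T hT
    rw [Real.rpow_one]
  have h1 : Tendsto (fun T : ℝ => (1 + Y + T) * Real.exp (-π * T)) atTop (nhds 0) := by
    have h := (hexp.const_mul (1 + Y)).add hTe
    simp only [mul_zero, add_zero] at h
    exact h.congr fun T => by ring
  have hg : Tendsto (fun T : ℝ => c * ((1 + Y + T) * Real.exp (-π * T)) * |Y - 0|) atTop
      (nhds 0) := by
    have := (h1.const_mul c).mul_const |Y - 0|
    simpa using this
  refine squeeze_zero_norm' ?_ hg
  filter_upwards [eventually_ge_atTop (1:ℝ)] with T hT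
  exact intervalIntegral.norm_integral_le_of_norm_le_const
    (fun y hy => by
      rw [Set.uIoc_of_le hY.le] at hy
      exact F_bound τ hτ0 Y hY T hT y hy.1.le hy.2)
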